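/- Let A₁, A₂ be real symmetric n×n matrices. Then max{xᵀA₁x, xᵀA₂x} ≥ 0 for all x ∈ ℝⁿ if and only if there exist t₁, t₂ ≥ 0 with t₁ + t₂ = 1 such that t₁A₁ + t₂A₂ is positive semidefinite. -/

import Mathlib

open Matrix

private lemma yuan_expand {n : ℕ} (M : Matrix (Fin n) (Fin n) ℝ) (x y : Fin n → ℝ) (a b : ℝ) :
    (a•x+b•y) ⬝ᵥ M *ᵥ (a•x+b•y) =
      a^2*(x ⬝ᵥ M *ᵥ x) + (a*b)*((x ⬝ᵥ M *ᵥ y) + (y ⬝ᵥ M *ᵥ x)) + b^2*(y ⬝ᵥ M *ᵥ y) := by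
  simp [mulVec_add, mulVec_smul, add_dotProduct, smul_dotProduct, dotProduct_add,
    dotProduct_smul, smul_eq_mul]
  ring

private lemma yuan_split {n : ℕ} (A B : Matrix (Fin n) (Fin n) ℝ) (s t : ℝ) (x : Fin n → ℝ) :
    x ⬝ᵥ (s•A + t•B) *ᵥ x = s*(x ⬝ᵥ A *ᵥ x) + t*(x ⬝ᵥ B *ᵥ x) := by
  simp [add_mulVec, smul_mulVec, dotProduct_add, dotProduct_smul, smul_eq_mul]

/-- Disjointness: can't have witnesses for both forms at the same `t`. -/
private lemma yuan_disj {n : ℕ} {A₁ A₂ : Matrix (Fin n) (Fin n) ℝ}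
    (h : ∀ x : Fin n → ℝ, 0 ≤ max (x ⬝ᵥ A₁ *ᵥ x) (x ⬝ᵥ A₂ *ᵥ x))
    {t : ℝ} (ht0 : 0 ≤ t) (ht1 : t ≤ 1) {x y : Fin n → ℝ}
    (hx1 : x ⬝ᵥ A₁ *ᵥ x < 0) (hy2 : y ⬝ᵥ A₂ *ᵥ y < 0)
    (hxt : x ⬝ᵥ (t•A₁ + (1-t)•A₂) *ᵥ x < 0)
    (hyt : y ⬝ᵥ (t•A₁ + (1-t)•A₂) *ᵥ y < 0) : False := by
  set M := t•A₁ + (1-t)•A₂ with hM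
  set c : ℝ := (x ⬝ᵥ M *ᵥ y) + (y ⬝ᵥ M *ᵥ x) with hc
  set ε : ℝ := if c ≤ 0 then 1 else -1 with hε
  have hεc : ε * c ≤ 0 := by
    rcases le_or_gt c 0 with h' | h'
    · simp [hε, h']
    · simp [hε, not_le.mpr h']; linarith
  have hε2 : ε^2 = 1 := by
    rcases le_or_gt c 0 with h' | h'
    · simp [hε, h']
    · simp [hε, not_le.mpr h']
  set z : ℝ → (Fin n → ℝ) := fun s => (1-s)•x + (ε*s)•y with hz
  -- q_t is negative along the whole path
  have hneg : ∀ s ∈ Set.Icc (0:ℝ) 1, (z s) ⬝ᵥ M *ᵥ (z s) < 0 := by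
    rintro s ⟨hs0, hs1⟩
    rw [hz]
    rw [yuan_expand]
    have h1 : (1-s)^2 * (x ⬝ᵥ M *ᵥ x) + (ε*s)^2 * (y ⬝ᵥ M *ᵥ y) < 0 := by
      rw [mul_pow, hε2, one_mul]
      have t2 : s^2 * (y ⬝ᵥ M *ᵥ y) ≤ 0 :=
        mul_nonpos_of_nonneg_of_nonpos (sq_nonneg _) hyt.le
      rcases lt_or_eq_of_le hs1 with h' | rfl
      · have : (0:ℝ) < (1-s)^2 := pow_pos (by linarith) 2
        have := mul_neg_of_pos_of_neg this hxt
        linarith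
      · have : ((1:ℝ)-1)^2 = 0 := by norm_num
        rw [this, zero_mul, zero_add]
        nlinarith
    have h2 : ((1-s)*(ε*s)) * c ≤ 0 := by
      have : ((1-s)*(ε*s)) * c = ((1-s)*s) * (ε*c) := by ring
      rw [this]
      exact mul_nonpos_of_nonneg_of_nonpos (by nlinarith) hεc
    rw [hc] at h2
    linarith
  -- continuity of the two forms along the path
  have hcont : ∀ A : Matrix (Fin n) (Fin n) ℝ, Continuous fun s => (z s) ⬝ᵥ A *ᵥ (z s) := by
    intro A
    have : (fun s => (z s) ⬝ᵥ A *ᵥ (z s)) = fun s =>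
        (1-s)^2*(x ⬝ᵥ A *ᵥ x) + ((1-s)*(ε*s))*((x ⬝ᵥ A *ᵥ y) + (y ⬝ᵥ A *ᵥ x))
          + (ε*s)^2*(y ⬝ᵥ A *ᵥ y) := by
      funext s; rw [hz]; exact yuan_expand ..
    rw [this]; fun_prop
  have hpre := isPreconnected_Icc (a := (0:ℝ)) (b := 1)
    {s | (z s) ⬝ᵥ A₁ *ᵥ (z s) < 0} {s | (z s) ⬝ᵥ A₂ *ᵥ (z s) < 0}
    (isOpen_lt (hcont A₁) continuous_const) (isOpen_lt (hcont A₂) continuous_const)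
    (by
      rintro s hs
      have := hneg s hs
      rw [hM, yuan_split] at this
      have hor : (z s) ⬝ᵥ A₁ *ᵥ (z s) < 0 ∨ (z s) ⬝ᵥ A₂ *ᵥ (z s) < 0 := by
        by_contra hcon
        push_neg at hcon
        nlinarith [hs.1, hs.2, hcon.1, hcon.2]
      simpa [Set.mem_union, Set.mem_setOf_eq] using hor)
    ⟨0, Set.mem_inter (by norm_num) (by simp [hz, hx1])⟩
    ⟨1, Set.mem_inter (by norm_num) (by
      have : z 1 = (0:ℝ)•x + ε•y := by simp [hz]
      simp only [Set.mem_setOf_eq, this, yuan_expand]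
      rw [hε2]
      norm_num
      nlinarith)⟩
  obtain ⟨s, _, hs1, hs2⟩ := hpre
  have := h (z s)
  rcases le_max_iff.mp this with h' | h' <;>
    simp only [Set.mem_setOf_eq] at hs1 hs2 <;> linarith

theorem yuan_lemma (n : ℕ) (A₁ A₂ : Matrix (Fin n) (Fin n) ℝ)
    (h₁ : A₁.IsSymm) (h₂ : A₂.IsSymm) :
    (∀ x : Fin n → ℝ, 0 ≤ max (x ⬝ᵥ A₁ *ᵥ x) (x ⬝ᵥ A₂ *ᵥ x)) ↔
    ∃ t₁ t₂ : ℝ, 0 ≤ t₁ ∧ 0 ≤ t₂ ∧ t₁ + t₂ = 1 ∧ (t₁ • A₁ + t₂ • A₂).PosSemidef := by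
  constructor
  · intro h
    by_contra hc
    push_neg at hc
    -- every matrix on the segment has a negative direction
    have hwit : ∀ t ∈ Set.Icc (0:ℝ) 1, ∃ x : Fin n → ℝ,
        x ⬝ᵥ (t•A₁ + (1-t)•A₂) *ᵥ x < 0 := by
      rintro t ⟨ht0, ht1⟩
      have hH : (t•A₁ + (1-t)•A₂).IsHermitian := by
        have : (t•A₁ + (1-t)•A₂).IsSymm := (h₁.smul t).add (h₂.smul (1-t))
        simpa [Matrix.IsHermitian, conjTranspose_eq_transpose_of_trivial, Matrix.IsSymm] using this
      have hnpsd := hc t (1-t) ht0 (by linarith) (by ring)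
      rw [Matrix.posSemidef_iff_dotProduct_mulVec] at hnpsd
      push_neg at hnpsd
      obtain ⟨x, hx⟩ := hnpsd hH
      exact ⟨x, by simpa using hx⟩
    have hpre := isPreconnected_Icc (a := (0:ℝ)) (b := 1)
      {t | ∃ x : Fin n → ℝ, x ⬝ᵥ (t•A₁ + (1-t)•A₂) *ᵥ x < 0 ∧ x ⬝ᵥ A₁ *ᵥ x < 0}
      {t | ∃ x : Fin n → ℝ, x ⬝ᵥ (t•A₁ + (1-t)•A₂) *ᵥ x < 0 ∧ x ⬝ᵥ A₂ *ᵥ x < 0}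
      (by
        rw [isOpen_iff_mem_nhds]
        rintro t ⟨x, hxt, hx1⟩
        have hcont : Continuous fun t' : ℝ => x ⬝ᵥ (t'•A₁ + (1-t')•A₂) *ᵥ x := by
          have : (fun t' : ℝ => x ⬝ᵥ (t'•A₁ + (1-t')•A₂) *ᵥ x)
              = fun t' : ℝ => t'*(x ⬝ᵥ A₁ *ᵥ x) + (1-t')*(x ⬝ᵥ A₂ *ᵥ x) := by
            funext t'; exact yuan_split ..
          rw [this]; fun_prop
        exact Filter.mem_of_superset
          ((isOpen_lt hcont continuous_const).mem_nhds hxt)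
          (fun t' ht' => ⟨x, ht', hx1⟩))
      (by
        rw [isOpen_iff_mem_nhds]
        rintro t ⟨x, hxt, hx2⟩
        have hcont : Continuous fun t' : ℝ => x ⬝ᵥ (t'•A₁ + (1-t')•A₂) *ᵥ x := by
          have : (fun t' : ℝ => x ⬝ᵥ (t'•A₁ + (1-t')•A₂) *ᵥ x)
              = fun t' : ℝ => t'*(x ⬝ᵥ A₁ *ᵥ x) + (1-t')*(x ⬝ᵥ A₂ *ᵥ x) := by
            funext t'; exact yuan_split ..
          rw [this]; fun_prop
        exact Filter.mem_of_superset
          ((isOpen_lt hcont continuous_const).mem_nhds hxt)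
          (fun t' ht' => ⟨x, ht', hx2⟩))
      (by
        rintro t ht
        obtain ⟨x, hx⟩ := hwit t ht
        have hsplit : x ⬝ᵥ (t•A₁ + (1-t)•A₂) *ᵥ x
            = t*(x ⬝ᵥ A₁ *ᵥ x) + (1-t)*(x ⬝ᵥ A₂ *ᵥ x) := yuan_split ..
        have : x ⬝ᵥ A₁ *ᵥ x < 0 ∨ x ⬝ᵥ A₂ *ᵥ x < 0 := by
          by_contra hcon
          push_neg at hcon
          rw [hsplit] at hx
          nlinarith [ht.1, ht.2, hcon.1, hcon.2]
        rcases this with h' | h'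
        · exact Or.inl ⟨x, hx, h'⟩
        · exact Or.inr ⟨x, hx, h'⟩)
      (by
        obtain ⟨x, hx⟩ := hwit 1 (by norm_num)
        have hx1 : x ⬝ᵥ A₁ *ᵥ x < 0 := by
          have := yuan_split A₁ A₂ 1 (1-1) x
          norm_num at this
          rw [yuan_split] at hx; norm_num at hx; exact hx
        exact ⟨1, by norm_num, x, hx, hx1⟩)
      (by
        obtain ⟨x, hx⟩ := hwit 0 (by norm_num)
        have hx2 : x ⬝ᵥ A₂ *ᵥ x < 0 := by
          rw [yuan_split] at hx; norm_num at hx; exact hx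
        exact ⟨0, by norm_num, x, hx, hx2⟩)
    obtain ⟨t, htIcc, ⟨x, hxt, hx1⟩, ⟨y, hyt, hy2⟩⟩ := hpre
    exact yuan_disj h htIcc.1 htIcc.2 hx1 hy2 hxt hyt
  · rintro ⟨t₁, t₂, ht₁, ht₂, hsum, hpsd⟩ x
    have := hpsd.dotProduct_mulVec_nonneg x
    simp only [star_trivial] at this
    rw [yuan_split] at this
    by_contra hcon
    push_neg at hcon
    rw [max_lt_iff] at hcon
    rcases ht₁.lt_or_eq with hpos | heq
    · have h3 := mul_neg_of_pos_of_neg hpos hcon.1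
      have h4 := mul_nonpos_of_nonneg_of_nonpos ht₂ hcon.2.le
      linarith
    · have ht2 : t₂ = 1 := by linarith
      rw [← heq, ht2] at this
      norm_num at this
      linarith [hcon.2]
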